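/- For any flower $(D_0; D_1, \dots, D_d)$ with $d$ petals (i.e., $D_1, \dots, D_d$ are closed disks with pairwise disjoint interiors, all tangent to $D_0$, consecutively tangent in cyclic order, and their union separates $D_0$ from infinity), with radii $r_0, r_1, \dots, r_d$, one has $r_2 \geq 0.01\, d^{-2} \min\{r_0, r_1\}$. -/

import Mathlib

open Metric


set_option maxHeartbeats 2000000 in
lemma ring_core (d : ℕ) (x y r : ℕ → ℝ) (k : ℕ) (hk2 : 2 ≤ k) (hkd : k ≤ d)
    (hpos : ∀ j, j ≤ d → 0 < r j)
    (htan0 : ∀ j, 1 ≤ j → j ≤ d → (x j - r 0)^2 + (y j)^2 = (r 0 + r j)^2)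
    (htan : ∀ j, 1 ≤ j → j < d → (x j - x (j+1))^2 + (y j - y (j+1))^2 = (r j + r (j+1))^2)
    (hx1 : x 1 = - r 1) (hy1 : y 1 = 0)
    (hdisj1 : ∀ j, 2 ≤ j → j ≤ d → (r 1 + r j)^2 ≤ (x j + r 1)^2 + (y j)^2)
    (hhit : (y k)^2 ≤ (r k)^2) :
    r 2 ≥ 0.01 / (d : ℝ)^2 * min (r 0) (r 1) := by
  have hr0 : 0 < r 0 := hpos 0 (by omega)
  have hr1 : 0 < r 1 := hpos 1 (by omega)
  have hd2 : 2 ≤ d := le_trans hk2 hkd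
  have hr2 : 0 < r 2 := hpos 2 hd2
  set A : ℕ → ℝ := fun j => (x j)^2 + (y j)^2 - (r j)^2 with hA
  set h : ℝ := (r 0 + r 1) / (2 * r 0 * r 1) with hh
  have hhpos : 0 < h := by positivity
  have hA0 : ∀ j, 1 ≤ j → j ≤ d → A j = 2 * r 0 * (x j + r j) := by
    intro j h1 h2
    have := htan0 j h1 h2
    simp only [hA]
    nlinarith [this]
  have hA1 : ∀ j, 2 ≤ j → j ≤ d → 2 * r 1 * (r j - x j) ≤ A j := by
    intro j h1 h2
    have := hdisj1 j h1 h2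
    simp only [hA]
    nlinarith [this]
  have hkey : ∀ j, 2 ≤ j → j ≤ d → 4 * (r 0 * r 1) * r j ≤ (r 0 + r 1) * A j := by
    intro j h1 h2
    have e0 : r 1 * A j = r 1 * (2 * r 0 * (x j + r j)) := by rw [hA0 j (by omega) h2]
    have e1 : r 0 * (2 * r 1 * (r j - x j)) ≤ r 0 * A j :=
      mul_le_mul_of_nonneg_left (hA1 j h1 h2) hr0.le
    nlinarith [e0, e1]
  have hApos : ∀ j, 2 ≤ j → j ≤ d → 0 < A j := by
    intro j h1 h2
    have := hkey j h1 h2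
    have hrj := hpos j h2
    nlinarith [mul_pos (mul_pos hr0 hr1) hrj, add_pos hr0 hr1]
  -- strip width bound
  have hrho : ∀ j, 2 ≤ j → j ≤ d → 2 * r j ≤ h * A j := by
    intro j h1 h2
    have := hkey j h1 h2
    rw [hh, div_mul_eq_mul_div, le_div_iff₀ (by positivity : (0:ℝ) < 2 * r 0 * r 1)]
    nlinarith [this]
  -- vertical step bound
  have hstep : ∀ j, 2 ≤ j → j + 1 ≤ d → |y j / A j - y (j+1) / A (j+1)| ≤ h := by
    intro j h1 h2
    have hAj := hApos j h1 (by omega)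
    have hAj1 := hApos (j+1) (by omega) h2
    have hC := htan j (by omega) (by omega)
    have iden : (x j * A (j+1) - x (j+1) * A j)^2 + (y j * A (j+1) - y (j+1) * A j)^2
        = (r j * A (j+1) + r (j+1) * A j)^2 := by
      simp only [hA]
      linear_combination (((x j)^2+(y j)^2-(r j)^2)*((x (j+1))^2+(y (j+1))^2-(r (j+1))^2)) * hC
    have key : (y j * A (j+1) - y (j+1) * A j)^2 ≤ (r j * A (j+1) + r (j+1) * A j)^2 := by
      nlinarith [sq_nonneg (x j * A (j+1) - x (j+1) * A j)]
    have hrj := hpos j (by omega)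
    have hrj1 := hpos (j+1) h2
    have hnn : (0:ℝ) ≤ r j * A (j+1) + r (j+1) * A j := by positivity
    have habs : |y j * A (j+1) - y (j+1) * A j| ≤ r j * A (j+1) + r (j+1) * A j :=
      abs_le_of_sq_le_sq key hnn
    have hrw : y j / A j - y (j+1) / A (j+1)
        = (y j * A (j+1) - y (j+1) * A j) / (A j * A (j+1)) := by
      field_simp
    rw [hrw, abs_div, abs_of_pos (mul_pos hAj hAj1), div_le_iff₀ (mul_pos hAj hAj1)]
    have b1 := hrho j h1 (by omega)
    have b2 := hrho (j+1) (by omega) h2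
    have mm1 := mul_le_mul_of_nonneg_right b1 hAj1.le
    have mm2 := mul_le_mul_of_nonneg_right b2 hAj.le
    have hAA : h * A j * A (j+1) + h * A (j+1) * A j = 2 * (h * (A j * A (j+1))) := by ring
    linarith [habs, mm1, mm2]
  -- chain bound by induction
  have hchain : ∀ j, 2 ≤ j → j ≤ d → |y 2 / A 2 - y j / A j| ≤ ((j:ℝ) - 2) * h := by
    intro j hj2 hjd
    induction j, hj2 using Nat.le_induction with
    | base => simp
    | succ n hn ih =>
      have hnd : n ≤ d := by omega
      have ihn := ih hnd
      have hs := hstep n hn (by omega)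
      calc |y 2 / A 2 - y (n+1) / A (n+1)|
          ≤ |y 2 / A 2 - y n / A n| + |y n / A n - y (n+1) / A (n+1)| := by
            exact abs_sub_le _ _ _
        _ ≤ ((n:ℝ) - 2) * h + h := add_le_add ihn hs
        _ = (((n:ℕ):ℝ) + 1 - 2) * h := by ring
        _ = (((n+1:ℕ):ℝ) - 2) * h := by push_cast; ring
  -- hit petal is close to the horizontal axis
  have hAk := hApos k hk2 hkd
  have hYk : |y k / A k| ≤ h / 2 := by
    have hyk : |y k| ≤ r k := abs_le_of_sq_le_sq hhit (hpos k hkd).le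
    have := hrho k hk2 hkd
    rw [abs_div, abs_of_pos hAk, div_le_div_iff₀ hAk (by norm_num)]
    nlinarith [hyk]
  have hY2 : |y 2 / A 2| ≤ (d:ℝ) * h := by
    have t1 : |y 2 / A 2| ≤ |y 2 / A 2 - y k / A k| + |y k / A k| := by
      have := abs_sub_abs_le_abs_sub (y 2 / A 2) (y k / A k)
      calc |y 2 / A 2| = |(y 2 / A 2 - y k / A k) + y k / A k| := by ring_nf
        _ ≤ |y 2 / A 2 - y k / A k| + |y k / A k| := abs_add_le _ _
    have t2 := hchain k hk2 hkd
    have hkdR : ((k:ℝ) - 2) ≤ (d:ℝ) - 2 := by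
      have : (k:ℝ) ≤ (d:ℝ) := by exact_mod_cast hkd
      linarith
    have hdR : (2:ℝ) ≤ (d:ℝ) := by exact_mod_cast hd2
    calc |y 2 / A 2| ≤ ((k:ℝ) - 2) * h + h / 2 := by linarith [t1, t2, hYk]
      _ ≤ ((d:ℝ) - 2) * h + h / 2 := by
          have := mul_le_mul_of_nonneg_right hkdR hhpos.le
          linarith
      _ ≤ (d:ℝ) * h := by linarith [hhpos.le]
  -- the second petal spans the strip
  have e2a : A 2 = 2 * r 0 * (x 2 + r 2) := hA0 2 (by omega) hd2
  have e2b : A 2 = 2 * r 1 * (r 2 - x 2) := by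
    have hC := htan 1 (by omega) (by omega)
    rw [hx1, hy1] at hC
    simp only [hA]
    linear_combination hC
  have eqx : (r 0 + r 1) * x 2 = r 2 * (r 1 - r 0) := by linarith [e2a, e2b]
  have eqA : (r 0 + r 1) * A 2 = 4 * (r 0 * r 1 * r 2) := by
    linear_combination (r 1) * e2a + (r 0) * e2b
  have hx2sq : (x 2)^2 ≤ (r 2)^2 := by
    have eqx2 : ((r 0 + r 1) * x 2)^2 = (r 2 * (r 1 - r 0))^2 := by rw [eqx]
    have hlt : (0:ℝ) < (r 0 + r 1)^2 := by positivity
    have hnn4 : (0:ℝ) ≤ r 0 * r 1 * (r 2)^2 :=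
      mul_nonneg (mul_nonneg hr0.le hr1.le) (sq_nonneg _)
    have step : (r 0 + r 1)^2 * (x 2)^2 ≤ (r 0 + r 1)^2 * (r 2)^2 := by
      linarith [eqx2, hnn4]
    exact (mul_le_mul_iff_right₀ hlt).mp step
  have hy2A : A 2 ≤ (y 2)^2 := by
    have : A 2 = (x 2)^2 + (y 2)^2 - (r 2)^2 := rfl
    linarith [hx2sq]
  have hA2pos := hApos 2 (by omega) hd2
  -- combine
  have h1' : |y 2| ≤ (d:ℝ) * h * A 2 := by
    rw [abs_div, abs_of_pos hA2pos, div_le_iff₀ hA2pos] at hY2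
    linarith [hY2]
  have h2' : A 2 ≤ ((d:ℝ) * h * A 2)^2 := by
    have : (y 2)^2 ≤ ((d:ℝ) * h * A 2)^2 := by
      rw [← sq_abs (y 2)]
      exact pow_le_pow_left₀ (abs_nonneg _) h1' 2
    linarith [hy2A]
  have h3' : 1 ≤ ((d:ℝ) * h)^2 * A 2 := by
    nlinarith [h2', hA2pos]
  have hsimp : h * (2 * r 0 * r 1) = r 0 + r 1 := by
    rw [hh]; field_simp
  have h4 : (2 * r 0 * r 1)^2 ≤ (d:ℝ)^2 * (r 0 + r 1)^2 * A 2 := by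
    have hmul := mul_le_mul_of_nonneg_left h3' (by positivity : (0:ℝ) ≤ (2 * r 0 * r 1)^2)
    calc (2 * r 0 * r 1)^2 = (2 * r 0 * r 1)^2 * 1 := by ring
      _ ≤ (2 * r 0 * r 1)^2 * (((d:ℝ) * h)^2 * A 2) := hmul
      _ = (d:ℝ)^2 * (h * (2 * r 0 * r 1))^2 * A 2 := by ring
      _ = (d:ℝ)^2 * (r 0 + r 1)^2 * A 2 := by rw [hsimp]
  have eqA' : (d:ℝ)^2 * (r 0 + r 1)^2 * A 2 = (d:ℝ)^2 * (r 0 + r 1) * (4 * (r 0 * r 1 * r 2)) := by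
    linear_combination ((d:ℝ)^2 * (r 0 + r 1)) * eqA
  have h5 : r 0 * r 1 ≤ (d:ℝ)^2 * (r 0 + r 1) * r 2 := by
    rw [eqA'] at h4
    nlinarith [h4, mul_pos hr0 hr1]
  -- finish
  have hdRpos : (0:ℝ) < (d:ℝ)^2 := by
    have : (2:ℝ) ≤ (d:ℝ) := by exact_mod_cast hd2
    positivity
  rw [ge_iff_le, div_mul_eq_mul_div, div_le_iff₀ hdRpos]
  have hm2 : min (r 0) (r 1) * (r 0 + r 1) ≤ 2 * (r 0 * r 1) := by
    rcases le_total (r 0) (r 1) with hc | hc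
    · rw [min_eq_left hc]; nlinarith
    · rw [min_eq_right hc]; nlinarith
  have h6 : min (r 0) (r 1) ≤ 2 * (d:ℝ)^2 * r 2 := by
    nlinarith [hm2, h5, add_pos hr0 hr1]
  nlinarith [h6, mul_nonneg (sq_nonneg ((d:ℝ))) hr2.le]



lemma ray_hits (d : ℕ) (c : ℕ → ℂ) (r : ℕ → ℝ) (u : ℂ) (hu : u ≠ 0)
    (hsep : Bornology.IsBounded
      (connectedComponentIn (⋃ j ∈ Finset.Icc 1 d, closedBall (c j) (r j))ᶜ (c 0))) :
    ∃ k, 1 ≤ k ∧ k ≤ d ∧ ∃ t : ℝ, 0 ≤ t ∧ c 0 - (t:ℂ) * u ∈ closedBall (c k) (r k) := by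
  by_contra hc
  push_neg at hc
  set S := (⋃ j ∈ Finset.Icc 1 d, closedBall (c j) (r j)) with hS
  set g : ℝ → ℂ := fun t => c 0 - (t:ℂ) * u with hg
  set R := g '' Set.Ici (0:ℝ) with hR
  have hgc : Continuous g := by
    apply Continuous.sub continuous_const
    exact (Complex.continuous_ofReal).mul continuous_const
  have hRconn : IsPreconnected R := isPreconnected_Ici.image g hgc.continuousOn
  have hc0R : c 0 ∈ R := ⟨0, Set.mem_Ici.mpr le_rfl, by simp [hg]⟩
  have hRS : R ⊆ Sᶜ := by
    rintro z ⟨t, ht, rfl⟩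
    intro hzS
    simp only [hS, Set.mem_iUnion, Finset.mem_Icc, exists_prop] at hzS
    obtain ⟨j, ⟨hj1, hj2⟩, hj3⟩ := hzS
    rcases Nat.eq_zero_or_pos j with h0 | _
    · omega
    · exact absurd hj3 (by
        have := hc j hj1 hj2 t ht
        exact this)
  have hsub := hRconn.subset_connectedComponentIn hc0R hRS
  have hbd := hsep.subset hsub
  rw [isBounded_iff_forall_norm_le] at hbd
  obtain ⟨C, hC⟩ := hbd
  have hC0 : ‖c 0‖ ≤ C := hC _ hc0R
  set t : ℝ := (C + ‖c 0‖ + 1) / ‖u‖ with htdef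
  have hupos : 0 < ‖u‖ := norm_pos_iff.mpr hu
  have htpos : 0 ≤ t := by
    apply div_nonneg _ hupos.le
    have := norm_nonneg (c 0)
    linarith
  have hmem : g t ∈ R := ⟨t, htpos, rfl⟩
  have hle := hC _ hmem
  have hnorm : ‖(t:ℂ) * u‖ - ‖c 0‖ ≤ ‖g t‖ := by
    have h1 : ‖(t:ℂ) * u‖ - ‖c 0‖ ≤ ‖(t:ℂ) * u - c 0‖ := norm_sub_norm_le _ _
    have h2 : ‖(t:ℂ) * u - c 0‖ = ‖g t‖ := by rw [hg]; simp [norm_sub_rev]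
    linarith
  have htu : ‖(t:ℂ) * u‖ = C + ‖c 0‖ + 1 := by
    rw [norm_mul, Complex.norm_real, Real.norm_eq_abs, abs_of_nonneg htpos, htdef]
    rw [div_mul_cancel₀]
    exact hupos.ne'
  rw [htu] at hnorm
  linarith

lemma sq_dist_complex (z w : ℂ) : (z.re - w.re)^2 + (z.im - w.im)^2 = dist z w ^ 2 := by
  rw [Complex.dist_eq_re_im, Real.sq_sqrt (by positivity)]

theorem ring_lemma_three_circle_variant
    (d : ℕ) (c : ℕ → ℂ) (r : ℕ → ℝ)
    (hpos : ∀ j, j ≤ d → 0 < r j)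
    (hdisjoint : ∀ i j, 1 ≤ i → i ≤ d → 1 ≤ j → j ≤ d → i ≠ j →
      Disjoint (ball (c i) (r i)) (ball (c j) (r j)))
    (htangent0 : ∀ j, 1 ≤ j → j ≤ d → dist (c 0) (c j) = r 0 + r j)
    (htangent : ∀ j, 1 ≤ j → j < d → dist (c j) (c (j + 1)) = r j + r (j + 1))
    (htangent_cyc : dist (c d) (c 1) = r d + r 1)
    (hseparate : Bornology.IsBounded
      (connectedComponentIn (⋃ j ∈ Finset.Icc 1 d, closedBall (c j) (r j))ᶜ (c 0))) :
    r 2 ≥ 0.01 / (d : ℝ) ^ 2 * min (r 0) (r 1) := by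
  -- rule out d = 0
  rcases Nat.eq_zero_or_pos d with hd0 | hd1
  · exfalso
    obtain ⟨k, hk1, hk2, -⟩ := ray_hits d c r 1 one_ne_zero hseparate
    omega
  -- rule out d = 1
  rcases eq_or_lt_of_le (Nat.succ_le_of_lt hd1) with hd1' | hd2
  · exfalso
    rw [← hd1'] at htangent_cyc
    rw [dist_self] at htangent_cyc
    have := hpos 1 hd1
    linarith
  -- main case : d ≥ 2
  have hr0 : 0 < r 0 := hpos 0 (by omega)
  have hr1 : 0 < r 1 := hpos 1 (by omega)
  have h01 : dist (c 0) (c 1) = r 0 + r 1 := htangent0 1 (by omega) (by omega)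
  set u : ℂ := (c 1 - c 0) / ((r 0 + r 1 : ℝ) : ℂ) with hu_def
  have hr01ne : ((r 0 + r 1 : ℝ) : ℂ) ≠ 0 := by
    simp only [ne_eq, Complex.ofReal_eq_zero]
    linarith
  have hc1c0 : c 1 - c 0 = ((r 0 + r 1 : ℝ) : ℂ) * u := by
    rw [hu_def, mul_div_cancel₀ _ hr01ne]
  have hunorm : ‖u‖ = 1 := by
    rw [hu_def, norm_div, Complex.norm_real, Real.norm_eq_abs,
      abs_of_pos (by linarith : (0:ℝ) < r 0 + r 1)]
    rw [show ‖c 1 - c 0‖ = dist (c 1) (c 0) from (dist_eq_norm _ _).symm,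
      dist_comm, h01]
    field_simp
  have hune : u ≠ 0 := by
    intro h
    rw [h, norm_zero] at hunorm
    norm_num at hunorm
  -- the rotation
  set μ : ℂ := -(starRingEnd ℂ) u with hμ_def
  have hμu : μ * u = -1 := by
    rw [hμ_def, neg_mul, mul_comm, Complex.mul_conj]
    norm_cast
    rw [Complex.normSq_eq_norm_sq, hunorm]
    norm_num
  have hμnorm : ‖μ‖ = 1 := by
    rw [hμ_def, norm_neg, RCLike.norm_conj, hunorm]
  set p : ℂ := c 0 + ((r 0 : ℝ) : ℂ) * u with hp_def
  set ζ : ℕ → ℂ := fun j => μ * (c j - p) with hζ_def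
  have hζdist : ∀ i j, dist (ζ i) (ζ j) = dist (c i) (c j) := by
    intro i j
    rw [dist_eq_norm, dist_eq_norm]
    have : ζ i - ζ j = μ * (c i - c j) := by rw [hζ_def]; ring
    rw [this, norm_mul, hμnorm, one_mul]
  have hζ0 : ζ 0 = ((r 0 : ℝ) : ℂ) := by
    rw [hζ_def, hp_def]
    push_cast
    linear_combination (-(r 0 : ℂ)) * hμu
  have hζ1 : ζ 1 = ((-r 1 : ℝ) : ℂ) := by
    rw [hζ_def]
    simp only
    rw [show c 1 - p = ((r 1 : ℝ) : ℂ) * u by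
      rw [hp_def]
      have : c 1 - (c 0 + ((r 0:ℝ):ℂ) * u) = (c 1 - c 0) - ((r 0:ℝ):ℂ) * u := by ring
      rw [this, hc1c0]
      push_cast
      ring]
    push_cast
    linear_combination (r 1 : ℂ) * hμu
  -- coordinates
  set x : ℕ → ℝ := fun j => (ζ j).re with hx_def
  set y : ℕ → ℝ := fun j => (ζ j).im with hy_def
  -- find the petal hit by the ray
  obtain ⟨k, hk1, hkd, t, ht0, hkmem⟩ := ray_hits d c r u hune hseparate
  have hhitζ : μ * ((c 0 - (t:ℂ) * u) - p) = (((r 0 + t : ℝ)) : ℂ) := by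
    rw [hp_def]
    push_cast
    linear_combination (-(t:ℂ) - (r 0 : ℂ)) * hμu
  have hhitdist : dist ((((r 0 + t : ℝ)) : ℂ)) (ζ k) ≤ r k := by
    have heq : dist ((((r 0 + t : ℝ)) : ℂ)) (ζ k) = dist (c 0 - (t:ℂ) * u) (c k) := by
      rw [← hhitζ, dist_eq_norm, dist_eq_norm]
      have he2 : μ * (c 0 - (t:ℂ) * u - p) - ζ k = μ * ((c 0 - (t:ℂ) * u) - c k) := by
        rw [hζ_def]; ring
      rw [he2, norm_mul, hμnorm, one_mul]
    rw [heq]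
    exact mem_closedBall.mp hkmem
  have hdist_real : ∀ a b : ℝ, dist (a:ℂ) (b:ℂ) = |a - b| := by
    intro a b
    rw [dist_eq_norm, ← Complex.ofReal_sub, Complex.norm_real, Real.norm_eq_abs]
  have hk2 : 2 ≤ k := by
    rcases Nat.lt_or_ge k 2 with hlt | hge
    · exfalso
      have hk1' : k = 1 := by omega
      rw [hk1', hζ1, hdist_real] at hhitdist
      rw [abs_of_pos (by linarith : (0:ℝ) < r 0 + t - - r 1)] at hhitdist
      linarith
    · exact hge
  -- hypotheses for the core lemma
  have hhit_sq : (y k)^2 ≤ (r k)^2 := by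
    have h1 : (((r 0 + t:ℝ):ℂ)).re - (ζ k).re = (r 0 + t) - x k := by
      simp [hx_def]
    have h2 := sq_dist_complex (((r 0 + t:ℝ)):ℂ) (ζ k)
    have h3 : ((((r 0 + t:ℝ)):ℂ)).im = 0 := by simp
    have h4 : dist ((((r 0 + t:ℝ)):ℂ)) (ζ k) ^ 2 ≤ (r k)^2 := by
      have hnn : (0:ℝ) ≤ dist ((((r 0 + t:ℝ)):ℂ)) (ζ k) := dist_nonneg
      nlinarith [hhitdist]
    rw [h1, h3] at h2
    have h5 : ((r 0 + t) - x k)^2 + (0 - y k)^2 ≤ (r k)^2 := by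
      rw [h2]; exact h4
    nlinarith [sq_nonneg ((r 0 + t) - x k)]
  have htan0' : ∀ j, 1 ≤ j → j ≤ d → (x j - r 0)^2 + (y j)^2 = (r 0 + r j)^2 := by
    intro j h1 h2
    have hd := hζdist j 0
    rw [hζ0] at hd
    have hsq := sq_dist_complex (ζ j) (((r 0:ℝ)):ℂ)
    simp only [Complex.ofReal_re, Complex.ofReal_im] at hsq
    rw [hd, dist_comm, htangent0 j h1 h2] at hsq
    have : (y j - 0)^2 = (y j)^2 := by ring
    rw [← this]
    exact hsq
  have htan' : ∀ j, 1 ≤ j → j < d →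
      (x j - x (j+1))^2 + (y j - y (j+1))^2 = (r j + r (j+1))^2 := by
    intro j h1 h2
    have hd := hζdist j (j+1)
    have hsq := sq_dist_complex (ζ j) (ζ (j+1))
    rw [hd, htangent j h1 h2] at hsq
    exact hsq
  have hx1 : x 1 = - r 1 := by simp [hx_def, hζ1]
  have hy1 : y 1 = 0 := by simp [hy_def, hζ1]
  have hdisj1' : ∀ j, 2 ≤ j → j ≤ d → (r 1 + r j)^2 ≤ (x j + r 1)^2 + (y j)^2 := by
    intro j h1 h2
    have hdj := hdisjoint 1 j (by omega) (by omega) (by omega) h2 (by omega)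
    have hge : r 1 + r j ≤ dist (c 1) (c j) :=
      (disjoint_ball_ball_iff hr1 (hpos j h2)).mp hdj
    have hd := hζdist 1 j
    rw [hζ1] at hd
    have hsq := sq_dist_complex (((-r 1:ℝ)):ℂ) (ζ j)
    simp only [Complex.ofReal_re, Complex.ofReal_im] at hsq
    rw [hd] at hsq
    have hnn : (0:ℝ) ≤ dist (c 1) (c j) := dist_nonneg
    have : (r 1 + r j)^2 ≤ dist (c 1) (c j)^2 :=
      pow_le_pow_left₀ (by have := (hpos j h2); linarith) hge 2
    rw [← hsq] at this
    calc (r 1 + r j)^2 ≤ (-r 1 - x j)^2 + (0 - y j)^2 := this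
      _ = (x j + r 1)^2 + (y j)^2 := by ring
  exact ring_core d x y r k hk2 hkd hpos htan0' htan' hx1 hy1 hdisj1' hhit_sq
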